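/- Let T : Σ → O(d) be an orthogonal representation, U, U' ⊆ ℝ^d T-invariant subspaces with U' irreducible and U not orthogonal to U'. Then the orthogonal projection π_U(U') is a T-irreducible invariant subspace of dimension dim U'. -/

import Mathlib

open RealInnerProductSpace

/-- If `U, U'` are invariant subspaces of an orthogonal representation, `U'`
irreducible and not orthogonal to `U`, then the orthogonal projection
`π_U(U')` is an irreducible invariant subspace of dimension `dim U'`. -/
theorem stmt_18 {E : Type*} [NormedAddCommGroup E] [InnerProductSpace ℝ E]
    [FiniteDimensional ℝ E]
    {Γ : Type*} [Group Γ] (T : Γ →* (E ≃ₗᵢ[ℝ] E))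
    (U U' : Submodule ℝ E)
    (hU : ∀ σ : Γ, ∀ x ∈ U, T σ x ∈ U)
    (hU' : ∀ σ : Γ, ∀ x ∈ U', T σ x ∈ U')
    (hU'ne : U' ≠ ⊥)
    (hU'irr : ∀ W : Submodule ℝ E, W ≤ U' →
      (∀ σ : Γ, ∀ x ∈ W, T σ x ∈ W) → W = ⊥ ∨ W = U')
    (hno : ∃ u ∈ U, ∃ u' ∈ U', ⟪u, u'⟫ ≠ 0) :
    ∀ W : Submodule ℝ E,
      W = Submodule.map (U.subtype ∘ₗ (U.orthogonalProjection).toLinearMap) U' →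
        (∀ σ : Γ, ∀ x ∈ W, T σ x ∈ W) ∧ W ≠ ⊥ ∧
          (∀ W' : Submodule ℝ E, W' ≤ W →
            (∀ σ : Γ, ∀ x ∈ W', T σ x ∈ W') → W' = ⊥ ∨ W' = W) ∧
          Module.finrank ℝ W = Module.finrank ℝ U' := by
  set p : E →ₗ[ℝ] E := U.subtype ∘ₗ (U.orthogonalProjection).toLinearMap with hp
  have hpval : ∀ x : E, p x = (U.orthogonalProjection x : E) := fun x => rfl
  -- T σ maps U onto itself; in particular T σ⁻¹ maps U into U
  -- T σ preserves Uᗮ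
  have hUperp : ∀ σ : Γ, ∀ y ∈ Uᗮ, T σ y ∈ Uᗮ := by
    intro σ y hy
    intro u hu
    have h1 : (T σ⁻¹) u ∈ U := hU σ⁻¹ u hu
    have h2 : ⟪(T σ⁻¹) u, y⟫ = 0 := (Submodule.mem_orthogonal U y).mp hy _ h1
    have h3 : (T σ) ((T σ⁻¹) u) = u := by
      have h4 : (T σ) ((T σ⁻¹) u) = (T (σ * σ⁻¹)) u := by rw [map_mul]; rfl
      rw [h4, mul_inv_cancel, map_one]; rfl
    calc ⟪u, T σ y⟫ = ⟪(T σ) ((T σ⁻¹) u), (T σ) y⟫ := by rw [h3]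
      _ = ⟪(T σ⁻¹) u, y⟫ := (T σ).inner_map_map _ _
      _ = 0 := h2
  -- p commutes with T σ
  have hcomm : ∀ σ : Γ, ∀ x : E, p (T σ x) = T σ (p x) := by
    intro σ x
    rw [hpval, hpval]
    apply Submodule.eq_starProjection_of_mem_orthogonal
    · exact hU σ _ (U.orthogonalProjection x).2
    · have : T σ x - T σ ((U.orthogonalProjection x : E))
          = T σ (x - (U.orthogonalProjection x : E)) := by
        rw [map_sub]
      rw [this]
      exact hUperp σ _ (Submodule.sub_starProjection_mem_orthogonal x)
  -- the kernel of p on U' is trivial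
  have hker : ∀ x ∈ U', p x = 0 → x = 0 := by
    intro x hx hpx
    set K : Submodule ℝ E := U' ⊓ (LinearMap.ker p) with hK
    have hKle : K ≤ U' := inf_le_left
    have hKinv : ∀ σ : Γ, ∀ z ∈ K, T σ z ∈ K := by
      intro σ z hz
      refine ⟨hU' σ z hz.1, ?_⟩
      have h2 : p (T σ z) = 0 := by rw [hcomm σ z, hz.2, map_zero]
      exact h2
    rcases hU'irr K hKle hKinv with h | h
    · have : x ∈ K := ⟨hx, hpx⟩
      rw [h] at this
      exact this
    · -- then U' ⊥ U, contradicting hno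
      exfalso
      obtain ⟨u, hu, u', hu', hne⟩ := hno
      apply hne
      have hu'K : u' ∈ K := h ▸ hu'
      have hpu' : (U.orthogonalProjection u' : E) = 0 := hu'K.2
      have : u' ∈ Uᗮ := by
        have : u' - (U.orthogonalProjection u' : E) ∈ Uᗮ := Submodule.sub_starProjection_mem_orthogonal (K := U) u'
        rwa [hpu', sub_zero] at this
      exact (Submodule.mem_orthogonal U u').mp this u hu
  intro W hW
  have hmem : ∀ w, w ∈ W ↔ ∃ x ∈ U', p x = w := by
    intro w; rw [hW]; exact Submodule.mem_map
  constructor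
  · -- invariance
    intro σ w hw
    obtain ⟨x, hx, rfl⟩ := (hmem _).mp hw
    refine (hmem _).mpr ⟨T σ x, hU' σ x hx, hcomm σ x⟩
  have hWne : W ≠ ⊥ := by
    intro hbot
    apply hU'ne
    rw [Submodule.eq_bot_iff]
    intro x hx
    apply hker x hx
    have : p x ∈ W := (hmem _).mpr ⟨x, hx, rfl⟩
    rwa [hbot, Submodule.mem_bot] at this
  refine ⟨hWne, ?_, ?_⟩
  · -- irreducibility
    intro W' hle hinv
    set V : Submodule ℝ E := U' ⊓ (Submodule.comap p W') with hV
    have hVle : V ≤ U' := inf_le_left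
    have hVinv : ∀ σ : Γ, ∀ z ∈ V, T σ z ∈ V := by
      intro σ z hz
      refine ⟨hU' σ z hz.1, ?_⟩
      have h2 : p (T σ z) ∈ W' := by rw [hcomm σ z]; exact hinv σ _ hz.2
      exact h2
    rcases hU'irr V hVle hVinv with h | h
    · left
      rw [Submodule.eq_bot_iff]
      intro w hw
      obtain ⟨x, hx, rfl⟩ := (hmem _).mp (hle hw)
      have : x ∈ V := ⟨hx, hw⟩
      rw [h, Submodule.mem_bot] at this
      rw [this, map_zero]
    · right
      apply le_antisymm hle
      intro w hw
      obtain ⟨x, hx, rfl⟩ := (hmem _).mp hw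
      have : x ∈ V := h ▸ hx
      exact this.2
  · -- dimension
    have hinj : Function.Injective (p ∘ₗ U'.subtype) := by
      rw [← LinearMap.ker_eq_bot, Submodule.eq_bot_iff]
      intro x hx
      have : p (U'.subtype x) = 0 := hx
      have hx0 : (x : E) = 0 := hker _ x.2 this
      exact Subtype.ext hx0
    have hrange : LinearMap.range (p ∘ₗ U'.subtype) = W := by
      rw [LinearMap.range_comp, Submodule.range_subtype, hW]
    have := LinearEquiv.finrank_eq (LinearEquiv.ofInjective _ hinj)
    rw [hrange] at this
    exact this.symm
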